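/- Let S be a finite non-commutative Clifford semigroup. If the commuting graph of S contains at least one cycle, then the girth of the commuting graph of S equals 3. -/

import Mathlib

/-- The commuting graph of a (non-commutative) semigroup: vertices are the
non-central elements, two distinct vertices are adjacent iff they commute. -/
def commGraph (S : Type*) [Mul S] : SimpleGraph {x : S // x ∉ Set.center S} where
  Adj a b := a ≠ b ∧ (a : S) * b = (b : S) * a
  symm := ⟨fun a b h => ⟨h.1.symm, h.2.symm⟩⟩
  loopless := ⟨fun a h => h.1 rfl⟩

/-- A Clifford semigroup: a semigroup with a unary operation `⁻¹` such that
`(x⁻¹)⁻¹ = x`, `x * x⁻¹ * x = x`, `x⁻¹ * x = x * x⁻¹`, and all idempotents are central. -/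
class CliffordSemigroup (S : Type*) extends Semigroup S, Inv S where
  inv_inv : ∀ x : S, x⁻¹⁻¹ = x
  mul_inv_mul : ∀ x : S, x * x⁻¹ * x = x
  inv_mul_comm : ∀ x : S, x⁻¹ * x = x * x⁻¹
  idem_central : ∀ e : S, e * e = e → ∀ y : S, e * y = y * e

namespace CliffordAux

open CliffordSemigroup

variable {S : Type*} [CliffordSemigroup S]

lemma central_comm {z : S} (hz : z ∈ Set.center S) (g : S) : z * g = g * z :=
  (Semigroup.mem_center_iff.mp hz g).symm

lemma central_of_idem {e : S} (h : e * e = e) : e ∈ Set.center S :=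
  Semigroup.mem_center_iff.mpr fun g => (idem_central e h g).symm

lemma e_idem (a : S) : (a * a⁻¹) * (a * a⁻¹) = a * a⁻¹ := by
  rw [← mul_assoc, mul_inv_mul]

lemma e_central (a : S) : a * a⁻¹ ∈ Set.center S := central_of_idem (e_idem a)

lemma mul_e (a : S) : a * (a * a⁻¹) = a := by
  rw [← inv_mul_comm, ← mul_assoc, mul_inv_mul]

/-- Key cancellation: if `a*b` commutes with `b` then `a*b = b*a`. -/
lemma comm_of_mul_comm_right {a b : S} (h : (a*b)*b = b*(a*b)) : a*b = b*a := by
  calc a*b = (a*b)*(b*b⁻¹) := by rw [mul_assoc, mul_e]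
    _ = ((a*b)*b)*b⁻¹ := (mul_assoc (a*b) b b⁻¹).symm
    _ = (b*(a*b))*b⁻¹ := by rw [h]
    _ = ((b*a)*b)*b⁻¹ := by rw [← mul_assoc b a b]
    _ = (b*a)*(b*b⁻¹) := mul_assoc (b*a) b b⁻¹
    _ = b*(a*(b*b⁻¹)) := mul_assoc b a (b*b⁻¹)
    _ = b*((b*b⁻¹)*a) := by rw [central_comm (e_central b) a]
    _ = (b*(b*b⁻¹))*a := (mul_assoc b (b*b⁻¹) a).symm
    _ = b*a := by rw [mul_e]

/-- Powers: `pw a n = a^(n+1)`. -/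
def pw (a : S) : ℕ → S
  | 0 => a
  | n+1 => pw a n * a

lemma pw_succ (a : S) (n : ℕ) : pw a (n+1) = pw a n * a := rfl

lemma mul_pw (a : S) (n : ℕ) : a * pw a n = pw a n * a := by
  induction n with
  | zero => rfl
  | succ n ih => rw [pw_succ, ← mul_assoc, ih]

lemma comm_pw {x a : S} (h : x*a = a*x) : ∀ n, x * pw a n = pw a n * x
  | 0 => h
  | n+1 => by rw [pw_succ, ← mul_assoc, comm_pw h n, mul_assoc, h, ← mul_assoc]

lemma pw_add (a : S) (m n : ℕ) : pw a (m + n + 1) = pw a m * pw a n := by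
  induction n with
  | zero => rfl
  | succ n ih =>
    show pw a ((m + n + 1) + 1) = _
    rw [pw_succ, ih, mul_assoc]
    rfl

lemma pw_inv (a : S) : ∀ n, pw a n * pw a⁻¹ n = a * a⁻¹
  | 0 => rfl
  | n+1 => by
    have hc : a * a⁻¹ = a⁻¹ * a := (inv_mul_comm a).symm
    rw [pw_succ, pw_succ, mul_assoc, ← mul_assoc a (pw a⁻¹ n) a⁻¹,
      comm_pw hc n, mul_assoc (pw a⁻¹ n) a a⁻¹, ← mul_assoc, pw_inv a n, e_idem]

lemma pw_mul_e (a : S) : ∀ n, pw a n * (a * a⁻¹) = pw a n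
  | 0 => mul_e a
  | n+1 => by rw [pw_succ, mul_assoc, mul_e]

lemma pw_eq_e {a : S} {n : ℕ} (h : pw a n * pw a n = pw a n) : pw a n = a * a⁻¹ := by
  calc pw a n = pw a n * (a*a⁻¹) := (pw_mul_e a n).symm
    _ = pw a n * (pw a n * pw a⁻¹ n) := by rw [pw_inv]
    _ = (pw a n * pw a n) * pw a⁻¹ n := (mul_assoc _ _ _).symm
    _ = pw a n * pw a⁻¹ n := by rw [h]
    _ = a * a⁻¹ := pw_inv a n

lemma exists_pw_e [Finite S] (a : S) :
    ∃ n, 1 ≤ n ∧ pw a n = a * a⁻¹ ∧ pw a (n+1) = a := by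
  obtain ⟨i, j, hne, heq⟩ := Finite.exists_ne_map_eq_of_infinite (pw a)
  wlog hij : i < j generalizing i j
  · exact this j i hne.symm heq.symm (by omega)
  have key : ∀ t, pw a (i + t) = pw a (j + t) := by
    intro t; induction t with
    | zero => simpa using heq
    | succ t ih =>
      have h1 : i + (t+1) = (i + t) + 1 := by omega
      have h2 : j + (t+1) = (j + t) + 1 := by omega
      rw [h1, h2, pw_succ, pw_succ, ih]
  have shift : ∀ s t, pw a (i + t) = pw a (i + t + s * (j - i)) := by
    intro s; induction s with
    | zero => simp
    | succ s ih =>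
      intro t
      have hs : (s+1) * (j - i) = s * (j - i) + (j - i) := by ring
      have h1 : i + t + (s+1) * (j - i) = j + (t + s * (j-i)) := by omega
      rw [ih t]
      have h2 : i + t + s * (j-i) = i + (t + s * (j-i)) := by omega
      rw [h2, key (t + s * (j-i)), ← h1]
  have hd1 : 1 ≤ j - i := by omega
  have hM : i + 2 ≤ (i+2)*(j-i) := Nat.le_mul_of_pos_right _ (by omega)
  set n := (i+2)*(j-i) - 1 with hn
  have hidem : pw a n * pw a n = pw a n := by
    have h1 : n + n + 1 = i + (n - i) + (i+2) * (j-i) := by omega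
    have h2 : i + (n - i) = n := by omega
    rw [← pw_add, h1, ← shift (i+2) (n-i), h2]
  refine ⟨n, by omega, pw_eq_e hidem, ?_⟩
  rw [pw_succ, pw_eq_e hidem, mul_inv_mul]

/-- The triangle property: three distinct pairwise-commuting non-central elements. -/
def Tri (S : Type*) [CliffordSemigroup S] : Prop :=
  ∃ p q r : S, p ∉ Set.center S ∧ q ∉ Set.center S ∧ r ∉ Set.center S ∧
    p ≠ q ∧ p ≠ r ∧ q ≠ r ∧ p*q = q*p ∧ p*r = r*p ∧ q*r = r*q

lemma cube [Finite S] {x a b : S}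
    (hx : x ∉ Set.center S) (ha : a ∉ Set.center S)
    (hxa : x*a = a*x) (hxb : x*b = b*x) (hab : a*b ≠ b*a)
    (hT : ¬ Tri S) : (a*a)*a = a := by
  have hxna : x ≠ a := fun hEq => hab (hEq ▸ hxb)
  have claim1 : ∀ n, pw a n ∉ Set.center S → pw a n = a ∨ pw a n = x := by
    intro n hn
    by_contra hcon
    push_neg at hcon
    exact hT ⟨x, a, pw a n, hx, ha, hn, hxna, fun h => hcon.2 h.symm,
      fun h => hcon.1 h.symm, hxa, comm_pw hxa n, mul_pw a n⟩
  obtain ⟨n, hn1, hne, hna⟩ := exists_pw_e a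
  have ha2 : pw a 1 = a * a := rfl
  match n, hn1, hne, hna with
  | 0, h, _, _ => exact absurd h (by omega)
  | 1, _, hne, hna =>
    have h1 : a*a = a*a⁻¹ := hne
    rw [h1, mul_inv_mul]
  | (k+2), _, hne, hna =>
    -- a = pw a (k+1) * (a*a)
    have haeq : a = pw a (k+1) * (a*a) := by
      have h := pw_add a (k+1) 1
      rw [show k+1+1+1 = k+2+1 by omega] at h
      exact hna.symm.trans h
    by_cases h2 : a*a ∈ Set.center S
    · by_cases hk : pw a (k+1) ∈ Set.center S
      · exact absurd (by rw [haeq]; exact Set.mul_mem_center hk h2 : a ∈ Set.center S) ha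
      · rcases claim1 (k+1) hk with hk_a | hk_x
        · have h1 : a*a = a*a⁻¹ := by
            rw [← hne, pw_succ, hk_a]
          rw [h1, mul_inv_mul]
        · exfalso; apply hab
          have haxz : a = x * (a*a) := by rw [hk_x] at haeq; exact haeq
          calc a*b = (x*(a*a))*b := by rw [← haxz]
            _ = x*((a*a)*b) := mul_assoc _ _ _
            _ = x*(b*(a*a)) := by rw [central_comm h2 b]
            _ = (x*b)*(a*a) := (mul_assoc _ _ _).symm
            _ = (b*x)*(a*a) := by rw [hxb]
            _ = b*(x*(a*a)) := mul_assoc _ _ _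
            _ = b*a := by rw [← haxz]
    · have h2' : pw a 1 ∉ Set.center S := fun hc => h2 (ha2 ▸ hc)
      rcases claim1 1 h2' with h2a | h2x
      · exact absurd (central_of_idem (ha2.symm.trans h2a)) ha
      · have hx2 : a*a = x := ha2.symm.trans h2x
        by_cases hk : pw a (k+1) ∈ Set.center S
        · exfalso; apply hab
          have haxz : a = pw a (k+1) * x := by rw [hx2] at haeq; exact haeq
          calc a*b = (pw a (k+1) * x)*b := by rw [← haxz]
            _ = pw a (k+1) * (x*b) := mul_assoc _ _ _
            _ = pw a (k+1) * (b*x) := by rw [hxb]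
            _ = (pw a (k+1) * b)*x := (mul_assoc _ _ _).symm
            _ = (b * pw a (k+1))*x := by rw [central_comm hk b]
            _ = b*(pw a (k+1) * x) := mul_assoc _ _ _
            _ = b*a := by rw [← haxz]
        · rcases claim1 (k+1) hk with hk_a | hk_x
          · exfalso; apply hx
            have h1 : a * a⁻¹ = x := by
              rw [← hne, pw_succ, hk_a, hx2]
            exact h1 ▸ e_central a
          · exfalso; apply hab
            have hxx : a = x * x := by rw [hk_x, hx2] at haeq; exact haeq
            calc a*b = (x*x)*b := by rw [← hxx]
              _ = x*(x*b) := mul_assoc _ _ _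
              _ = x*(b*x) := by rw [hxb]
              _ = (x*b)*x := (mul_assoc _ _ _).symm
              _ = (b*x)*x := by rw [hxb]
              _ = b*(x*x) := mul_assoc _ _ _
              _ = b*a := by rw [← hxx]

lemma triangle_exists [Finite S] {x a b : S}
    (hx : x ∉ Set.center S) (ha : a ∉ Set.center S) (hb : b ∉ Set.center S)
    (hxa : x*a = a*x) (hxb : x*b = b*x) (hab : a*b ≠ b*a) : Tri S := by
  by_contra hT
  have hba : b*a ≠ a*b := fun h => hab h.symm
  have ha3 : (a*a)*a = a := cube hx ha hxa hxb hab hT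
  have hb3 : (b*b)*b = b := cube hx hb hxb hxa hba hT
  have ha2 : a*a ∈ Set.center S := central_of_idem (by
    calc (a*a)*(a*a) = ((a*a)*a)*a := (mul_assoc _ _ _).symm
      _ = a*a := by rw [ha3])
  have hb2 : b*b ∈ Set.center S := central_of_idem (by
    calc (b*b)*(b*b) = ((b*b)*b)*b := (mul_assoc _ _ _).symm
      _ = b*b := by rw [hb3])
  apply hT
  refine ⟨x, a*b, b*a, hx, ?_, ?_, ?_, ?_, hab, ?_, ?_, ?_⟩
  · exact fun hc => hab (comm_of_mul_comm_right (central_comm hc b))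
  · exact fun hc => hba (comm_of_mul_comm_right (central_comm hc a))
  · exact fun h => hab (comm_of_mul_comm_right (h ▸ hxb))
  · exact fun h => hba (comm_of_mul_comm_right (h ▸ hxa))
  · calc x*(a*b) = (x*a)*b := (mul_assoc _ _ _).symm
      _ = (a*x)*b := by rw [hxa]
      _ = a*(x*b) := mul_assoc _ _ _
      _ = a*(b*x) := by rw [hxb]
      _ = (a*b)*x := (mul_assoc _ _ _).symm
  · calc x*(b*a) = (x*b)*a := (mul_assoc _ _ _).symm
      _ = (b*x)*a := by rw [hxb]
      _ = b*(x*a) := mul_assoc _ _ _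
      _ = b*(a*x) := by rw [hxa]
      _ = (b*a)*x := (mul_assoc _ _ _).symm
  · calc (a*b)*(b*a) = a*(b*(b*a)) := mul_assoc _ _ _
      _ = a*((b*b)*a) := by rw [← mul_assoc b b a]
      _ = a*(a*(b*b)) := by rw [central_comm hb2 a]
      _ = (a*a)*(b*b) := (mul_assoc _ _ _).symm
      _ = (b*b)*(a*a) := central_comm ha2 (b*b) ▸ (central_comm hb2 (a*a)).symm
      _ = b*(b*(a*a)) := mul_assoc _ _ _
      _ = b*((a*a)*b) := by rw [← central_comm ha2 b]
      _ = b*(a*(a*b)) := by rw [mul_assoc a a b]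
      _ = (b*a)*(a*b) := (mul_assoc b a (a*b)).symm

end CliffordAux

open CliffordAux in
lemma egirth_le_three_of_triangle {V : Type*} {G : SimpleGraph V} {p q r : V}
    (hpq : G.Adj p q) (hqr : G.Adj q r) (hrp : G.Adj r p) : G.egirth ≤ 3 := by
  have h1 : p ≠ q := hpq.ne
  have h2 : q ≠ r := hqr.ne
  have h3 : r ≠ p := hrp.ne
  let c : G.Walk p p := .cons hpq (.cons hqr (.cons hrp .nil))
  have hc : c.IsCycle := by
    rw [SimpleGraph.Walk.isCycle_def]
    refine ⟨?_, by simp [c], ?_⟩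
    · rw [SimpleGraph.Walk.isTrail_def]
      simp only [c, SimpleGraph.Walk.edges_cons, SimpleGraph.Walk.edges_nil,
        List.nodup_cons, List.mem_cons, List.mem_singleton, List.not_mem_nil,
        List.nodup_nil, and_true, not_or]
      refine ⟨⟨?_, ?_⟩, ?_, fun h => h⟩ <;> rw [Sym2.eq_iff] <;> tauto
    · simp only [c, SimpleGraph.Walk.support_cons, SimpleGraph.Walk.support_nil,
        List.tail_cons, List.nodup_cons, List.mem_cons, List.mem_singleton,
        List.not_mem_nil, List.nodup_nil, and_true, not_or]
      tauto
  have hle : G.egirth ≤ (c.length : ℕ∞) := by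
    apply iInf_le_of_le p
    apply iInf_le_of_le c
    exact iInf_le _ hc
  simpa [c] using hle

theorem clifford_girth_eq_three {S : Type*} [CliffordSemigroup S] [Fintype S]
    (hnc : ∃ a b : S, a * b ≠ b * a)
    (hcyc : ¬ (commGraph S).IsAcyclic) :
    (commGraph S).girth = 3 := by
  classical
  have hmain : (commGraph S).egirth ≤ 3 := by
    obtain ⟨v, w, hw, -⟩ := SimpleGraph.exists_egirth_eq_length.mpr hcyc
    have h3 := hw.three_le_length
    cases w with
    | nil => simp at h3
    | cons hadj p =>
      rename_i u
      cases p with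
      | nil => simp at h3
      | cons hadj3 q =>
        rename_i u2
        -- w = cons hadj (cons hadj3 q), hadj : Adj v u, hadj3 : Adj u u2, q : Walk u2 v
        have hq1 : 1 ≤ q.length := by
          simp only [SimpleGraph.Walk.length_cons] at h3; omega
        have hpath : (SimpleGraph.Walk.cons hadj3 q).IsPath :=
          ((SimpleGraph.Walk.cons_isCycle_iff _ hadj).mp hw).1
        have husup : u ∉ q.support :=
          ((SimpleGraph.Walk.cons_isPath_iff hadj3 q).mp hpath).2
        set z := q.getVert (q.length - 1) with hzdef
        have hadjzv : (commGraph S).Adj z v := by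
          have := q.adj_getVert_succ (i := q.length - 1) (by omega)
          rwa [show q.length - 1 + 1 = q.length by omega, q.getVert_length] at this
        have hzsup : z ∈ q.support :=
          SimpleGraph.Walk.mem_support_iff_exists_getVert.mpr
            ⟨q.length - 1, rfl, by omega⟩
        have hne_uz : u ≠ z := fun h => husup (h ▸ hzsup)
        by_cases huz : (commGraph S).Adj u z
        · exact egirth_le_three_of_triangle hadj huz hadjzv
        · -- u and z don't commute
          have hcomm : ¬ ((u : S) * z = (z : S) * u) := fun hc => huz ⟨hne_uz, hc⟩
          have hXA : (v : S) * u = (u : S) * v := hadj.2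
          have hXB : (v : S) * z = (z : S) * v := hadjzv.2.symm
          obtain ⟨p', q', r', hp', hq', hr', hpq', hpr', hqr', c1, c2, c3⟩ :=
            CliffordAux.triangle_exists v.2 u.2 z.2 hXA hXB hcomm
          exact egirth_le_three_of_triangle
            (G := commGraph S) (p := ⟨p', hp'⟩) (q := ⟨q', hq'⟩) (r := ⟨r', hr'⟩)
            ⟨fun h => hpq' (congrArg Subtype.val h), c1⟩
            ⟨fun h => hqr' (congrArg Subtype.val h), c3⟩
            ⟨fun h => hpr' (congrArg Subtype.val h).symm, c2.symm⟩
  have hge : 3 ≤ (commGraph S).girth := SimpleGraph.three_le_girth hcyc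
  have hle : (commGraph S).girth ≤ 3 := by
    have := ENat.toNat_le_toNat hmain (by simp)
    simpa [SimpleGraph.girth] using this
  omega
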